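/- Let (X,p) be a 0-complete partial metric space, and let A and B be nonempty sequentially closed subsets of X with X = A ∪ B. Let T : X → X satisfy (C1) T(A) ⊆ B and T(B) ⊆ A, and (C2) there exists α ∈ (0,1) such that p(Tx,Ty) ≤ α·p(x,y) for all x ∈ A and all y ∈ B. Then T has a unique fixed point, and this fixed point lies in A ∩ B (in particular A ∩ B ≠ ∅). -/

import Mathlib

open Filter Topology

/-- A partial metric on a type `X`. -/
structure IsPartialMetric {X : Type*} (p : X → X → ℝ) : Prop where
  nonneg : ∀ x y, 0 ≤ p x y
  symm : ∀ x y, p x y = p y x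
  eq_of : ∀ x y, p x x = p x y → p x y = p y y → x = y
  self_le : ∀ x y, p x x ≤ p x y
  triangle : ∀ x y z, p x z + p y y ≤ p x y + p y z

/-- A sequence `x` converges to `a` in the partial metric `p`:
`lim_{n→∞} p(a, x n) = p(a,a)`. -/
def PConverges {X : Type*} (p : X → X → ℝ) (x : ℕ → X) (a : X) : Prop :=
  Tendsto (fun n => p a (x n)) atTop (𝓝 (p a a))

/-- A sequence is `0`-Cauchy: `lim_{m,n→∞} p(x n, x m) = 0`. -/
def PZeroCauchy {X : Type*} (p : X → X → ℝ) (x : ℕ → X) : Prop :=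
  Tendsto (fun mn : ℕ × ℕ => p (x mn.1) (x mn.2)) atTop (𝓝 0)

/-- `(X,p)` is `0`-complete. -/
def PZeroComplete {X : Type*} (p : X → X → ℝ) : Prop :=
  ∀ x : ℕ → X, PZeroCauchy p x → ∃ a, PConverges p x a ∧ p a a = 0

/-- A set is sequentially closed with respect to `p`-convergence. -/
def SeqClosed {X : Type*} (p : X → X → ℝ) (A : Set X) : Prop :=
  ∀ (x : ℕ → X) (a : X), (∀ n, x n ∈ A) → PConverges p x a → a ∈ A

/-- A sequence is Cauchy in `(X,p)`: the double limit `lim_{m,n→∞} p(x n, x m)`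
exists (finite). -/
def PCauchy {X : Type*} (p : X → X → ℝ) (x : ℕ → X) : Prop :=
  ∃ L : ℝ, Tendsto (fun mn : ℕ × ℕ => p (x mn.1) (x mn.2)) atTop (𝓝 L)

/-- `(X,p)` is complete: every Cauchy sequence converges to some `a` with
`p(a,a) = lim_{m,n→∞} p(x n, x m)`. -/
def PComplete {X : Type*} (p : X → X → ℝ) : Prop :=
  ∀ x : ℕ → X, PCauchy p x → ∃ a, PConverges p x a ∧
    Tendsto (fun mn : ℕ × ℕ => p (x mn.1) (x mn.2)) atTop (𝓝 (p a a))

/-- Continuity of `T : X → X` with respect to the open `p`-balls. -/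
def PMContinuous {X : Type*} (p : X → X → ℝ) (T : X → X) : Prop :=
  ∀ x₀ : X, ∀ ε > (0:ℝ), ∃ δ > (0:ℝ), ∀ y,
    p x₀ y < p x₀ x₀ + δ → p (T x₀) (T y) < p (T x₀) (T x₀) + ε

/-- A set `A` is `0`-compact: every sequence in `A` has a subsequence converging
to some `a ∈ A` with `lim_{n→∞} p(x (k n), a) = p(a,a) = 0`. -/
def PZeroCompact {X : Type*} (p : X → X → ℝ) (A : Set X) : Prop :=
  ∀ x : ℕ → X, (∀ n, x n ∈ A) → ∃ (k : ℕ → ℕ) (a : X), StrictMono k ∧ a ∈ A ∧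
    Tendsto (fun n => p (x (k n)) a) atTop (𝓝 (p a a)) ∧ p a a = 0

/-- cyclical Banach contraction principle for two sets. -/
theorem cyclic_contraction_two_sets {X : Type*} (p : X → X → ℝ)
    (hp : IsPartialMetric p) (hcomp : PZeroComplete p)
    (A B : Set X) (hA : A.Nonempty) (hB : B.Nonempty)
    (hAcl : SeqClosed p A) (hBcl : SeqClosed p B) (hX : A ∪ B = Set.univ)
    (T : X → X) (hTA : ∀ x ∈ A, T x ∈ B) (hTB : ∀ y ∈ B, T y ∈ A)
    (α : ℝ) (hα : α ∈ Set.Ioo (0:ℝ) 1)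
    (hcontr : ∀ x ∈ A, ∀ y ∈ B, p (T x) (T y) ≤ α * p x y) :
    ∃ z, T z = z ∧ z ∈ A ∩ B ∧ ∀ w, T w = w → w = z := by
  obtain ⟨hα0, hα1⟩ := hα
  obtain ⟨a0, ha0⟩ := hA
  set x : ℕ → X := fun n => T^[n] a0 with hxdef
  have hx0 : x 0 = a0 := rfl
  have hxs : ∀ n, x (n + 1) = T (x n) := fun n => Function.iterate_succ_apply' T n a0
  -- alternating membership
  have halt : ∀ n, (x n ∈ A ∧ x (n+1) ∈ B) ∨ (x n ∈ B ∧ x (n+1) ∈ A) := by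
    intro n
    induction n with
    | zero => exact Or.inl ⟨ha0, by rw [hxs]; exact hTA _ ha0⟩
    | succ k ih =>
      rcases ih with ⟨_, hb⟩ | ⟨_, ha⟩
      · exact Or.inr ⟨hb, by rw [hxs]; exact hTB _ hb⟩
      · exact Or.inl ⟨ha, by rw [hxs]; exact hTA _ ha⟩
  have heven : ∀ n, x (2*n) ∈ A ∧ x (2*n+1) ∈ B := by
    intro n
    induction n with
    | zero => exact ⟨ha0, by rw [hxs]; exact hTA _ ha0⟩
    | succ k ih =>
      have h1 : x (2*(k+1)) ∈ A := by
        have : 2*(k+1) = (2*k+1) + 1 := by ring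
        rw [this, hxs]; exact hTB _ ih.2
      exact ⟨h1, by rw [hxs]; exact hTA _ h1⟩
  have hstep : ∀ n, p (x (n+1)) (x (n+2)) ≤ α * p (x n) (x (n+1)) := by
    intro n
    rcases halt n with ⟨ha, hb⟩ | ⟨hb, ha⟩
    · have h := hcontr _ ha _ hb
      rw [← hxs n, ← hxs (n+1)] at h
      simpa using h
    · have h := hcontr _ ha _ hb
      rw [← hxs n, ← hxs (n+1), hp.symm (x (n+1+1)), hp.symm (x (n+1)) (x n)] at h
      simpa using h
  set d0 : ℝ := p (x 0) (x 1) with hd0def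
  have hd0nn : 0 ≤ d0 := hp.nonneg _ _
  have hd : ∀ n, p (x n) (x (n+1)) ≤ α ^ n * d0 := by
    intro n
    induction n with
    | zero => simp [hd0def]
    | succ k ih =>
      have h1 := hstep k
      have h2 : α * (α ^ k * d0) = α ^ (k+1) * d0 := by ring
      have := mul_le_mul_of_nonneg_left ih hα0.le
      calc p (x (k+1)) (x (k+2)) ≤ α * p (x k) (x (k+1)) := h1
        _ ≤ α * (α ^ k * d0) := this
        _ = α ^ (k+1) * d0 := h2
  set C : ℝ := d0 / (1 - α) with hCdef
  have h1α : 0 < 1 - α := by linarith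
  have hC0 : 0 ≤ C := div_nonneg hd0nn h1α.le
  have hCd0 : d0 = C * (1 - α) := by rw [hCdef]; field_simp [h1α.ne']
  have hchain : ∀ k n, p (x n) (x (n+k)) ≤ α ^ n * C := by
    intro k
    induction k with
    | zero =>
      intro n
      simp only [Nat.add_zero]
      have h1 : p (x n) (x n) ≤ p (x n) (x (n+1)) := hp.self_le _ _
      have h2 := hd n
      have h3 : (0:ℝ) ≤ α ^ n := pow_nonneg hα0.le n
      have h4 : α ^ n * d0 ≤ α ^ n * C :=
        mul_le_mul_of_nonneg_left (by nlinarith) h3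
      linarith
    | succ k ih =>
      intro n
      have heq : n + (k+1) = (n+1) + k := by omega
      rw [heq]
      have htri := hp.triangle (x n) (x (n+1)) (x (n+1+k))
      have hnn := hp.nonneg (x (n+1)) (x (n+1))
      have h1 := hd n
      have h2 := ih (n+1)
      have h3 : (0:ℝ) ≤ α ^ n := pow_nonneg hα0.le n
      have h4 : α ^ (n+1) = α ^ n * α := pow_succ α n
      nlinarith
  have hbound : ∀ m n : ℕ, p (x m) (x n) ≤ α ^ (min m n) * C := by
    intro m n
    rcases le_total m n with h | h
    · have : n = m + (n - m) := by omega
      rw [min_eq_left h, this]; exact hchain (n - m) m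
    · have : m = n + (m - n) := by omega
      rw [min_eq_right h, hp.symm, this]; exact hchain (m - n) n
  have hmin : Tendsto (fun mn : ℕ × ℕ => min mn.1 mn.2) atTop atTop := by
    apply tendsto_atTop.2
    intro b
    filter_upwards [eventually_ge_atTop ((b, b) : ℕ × ℕ)] with mn h
    exact le_min h.1 h.2
  have hbtend : Tendsto (fun mn : ℕ × ℕ => α ^ (min mn.1 mn.2) * C) atTop (𝓝 0) := by
    have h1 := (tendsto_pow_atTop_nhds_zero_of_lt_one hα0.le hα1).comp hmin
    simpa using h1.mul_const C
  have hcauchy : PZeroCauchy p x := by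
    refine tendsto_of_tendsto_of_tendsto_of_le_of_le tendsto_const_nhds hbtend ?_ ?_
    · intro mn; exact hp.nonneg _ _
    · intro mn; exact hbound mn.1 mn.2
  obtain ⟨z, hzconv, hzz⟩ := hcomp x hcauchy
  have hzconv0 : Tendsto (fun n => p z (x n)) atTop (𝓝 0) := by
    have h := hzconv
    rw [PConverges, hzz] at h
    exact h
  have h2t : Tendsto (fun n : ℕ => 2 * n) atTop atTop :=
    tendsto_atTop.2 fun b => eventually_atTop.2 ⟨b, fun n hn => by omega⟩
  have h2t1 : Tendsto (fun n : ℕ => 2 * n + 1) atTop atTop :=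
    tendsto_atTop.2 fun b => eventually_atTop.2 ⟨b, fun n hn => by omega⟩
  have hzA : z ∈ A := by
    apply hAcl (fun n => x (2*n)) z (fun n => (heven n).1)
    show Tendsto (fun n => p z (x (2*n))) atTop (𝓝 (p z z))
    rw [hzz]
    exact hzconv0.comp h2t
  have hzB : z ∈ B := by
    apply hBcl (fun n => x (2*n+1)) z (fun n => (heven n).2)
    show Tendsto (fun n => p z (x (2*n+1))) atTop (𝓝 (p z z))
    rw [hzz]
    exact hzconv0.comp h2t1
  have hTzn : ∀ n, p (T z) (x (n+1)) ≤ α * p z (x n) := by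
    intro n
    rw [hxs]
    have hxn : x n ∈ A ∪ B := by rw [hX]; trivial
    rcases hxn with h | h
    · calc p (T z) (T (x n)) = p (T (x n)) (T z) := hp.symm _ _
        _ ≤ α * p (x n) z := hcontr _ h _ hzB
        _ = α * p z (x n) := by rw [hp.symm]
    · exact hcontr _ hzA _ h
  have hkey : ∀ n, p (T z) z ≤ α * p z (x n) + p z (x (n+1)) := by
    intro n
    have htri := hp.triangle (T z) (x (n+1)) z
    have hnn := hp.nonneg (x (n+1)) (x (n+1))
    have h1 := hTzn n
    have h2 : p (x (n+1)) z = p z (x (n+1)) := hp.symm _ _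
    linarith
  have hlim : Tendsto (fun n => α * p z (x n) + p z (x (n+1))) atTop (𝓝 0) := by
    have h1 := hzconv0.const_mul α
    have h2 := hzconv0.comp (tendsto_add_atTop_nat 1)
    simpa using h1.add h2
  have hTzz : p (T z) z = 0 :=
    le_antisymm (ge_of_tendsto' hlim hkey) (hp.nonneg _ _)
  have hTzfix : T z = z := by
    apply hp.eq_of
    · have h1 : p (T z) (T z) ≤ p (T z) z := hp.self_le _ _
      have h2 := hp.nonneg (T z) (T z)
      rw [hTzz]; linarith
    · rw [hTzz, hzz]
  refine ⟨z, hTzfix, ⟨hzA, hzB⟩, ?_⟩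
  intro w hw
  have hwU : w ∈ A ∪ B := by rw [hX]; trivial
  have hcw : p w z ≤ α * p w z := by
    rcases hwU with h | h
    · have := hcontr _ h _ hzB
      rwa [hw, hTzfix] at this
    · have := hcontr _ hzA _ h
      rw [hTzfix, hw] at this
      calc p w z = p z w := hp.symm _ _
        _ ≤ α * p z w := this
        _ = α * p w z := by rw [hp.symm]
  have hwz : p w z = 0 := by
    have := hp.nonneg w z
    nlinarith
  apply hp.eq_of
  · have h1 : p w w ≤ p w z := hp.self_le _ _
    have h2 := hp.nonneg w w
    rw [hwz]; linarith
  · rw [hwz, hzz]
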